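/- Let 𝓗 be a complex Hilbert space and f : 𝔻 → 𝓑(𝓗) analytic with ‖f(z)‖ ≤ 1 on 𝔻 and f(0) = a₀·I for some a₀ ∈ ℂ with |a₀| < 1. Then for all z ∈ 𝔻, ‖f(z)‖ ≤ (‖f(0)‖ + |z|)/(1 + ‖f(0)‖·|z|). -/

import Mathlib

open Metric Complex

lemma aux_id (a w : ℂ) : Complex.normSq (1 - (starRingEnd ℂ) a * w) - Complex.normSq (w - a)
    = (1 - Complex.normSq a) * (1 - Complex.normSq w) := by
  simp [Complex.normSq_apply, Complex.mul_re, Complex.mul_im, Complex.sub_re, Complex.sub_im,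
    Complex.conj_re, Complex.conj_im, Complex.one_re, Complex.one_im]
  ring

lemma mobius_lt_one {a w : ℂ} (ha : ‖a‖ < 1) (hw : ‖w‖ < 1) :
    ‖(w - a) / (1 - (starRingEnd ℂ) a * w)‖ < 1 := by
  have hid := aux_id a w
  have hna : Complex.normSq a < 1 := by rw [← Complex.sq_norm]; nlinarith [norm_nonneg a]
  have hnw : Complex.normSq w < 1 := by rw [← Complex.sq_norm]; nlinarith [norm_nonneg w]
  have hpos : 0 < Complex.normSq (1 - (starRingEnd ℂ) a * w) := by
    nlinarith [Complex.normSq_nonneg (w - a)]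
  have hden : 0 < ‖1 - (starRingEnd ℂ) a * w‖ := by
    rw [← Complex.sq_norm] at hpos
    nlinarith [norm_nonneg (1 - (starRingEnd ℂ) a * w)]
  rw [norm_div, div_lt_one hden]
  have h1 : ‖w - a‖ ^ 2 < ‖1 - (starRingEnd ℂ) a * w‖ ^ 2 := by
    rw [Complex.sq_norm, Complex.sq_norm]; nlinarith
  nlinarith [norm_nonneg (w - a)]

lemma den_ne_zero {a w : ℂ} (ha : ‖a‖ < 1) (hw : ‖w‖ ≤ 1) :
    (1 : ℂ) - (starRingEnd ℂ) a * w ≠ 0 := by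
  intro h
  have h1 : (starRingEnd ℂ) a * w = 1 := by linear_combination -h
  have := congrArg (‖·‖) h1
  rw [norm_mul, Complex.norm_conj, norm_one] at this
  nlinarith [norm_nonneg a, norm_nonneg w]

/-- Key: `|w + a| * (1 + |a||w|) ≤ (|a| + |w|) * |1 + conj a * w|`. -/
lemma mobius_key (a w : ℂ) (ha : ‖a‖ ≤ 1) (hw : ‖w‖ ≤ 1) :
    ‖w + a‖ * (1 + ‖a‖ * ‖w‖)
      ≤ (‖a‖ + ‖w‖) * ‖1 + (starRingEnd ℂ) a * w‖ := by
  set p := ‖w‖ with hp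
  set q := ‖a‖ with hq
  have hp0 : 0 ≤ p := norm_nonneg w
  have hq0 : 0 ≤ q := norm_nonneg a
  have ht : ((starRingEnd ℂ) a * w).re ≤ q * p := by
    calc ((starRingEnd ℂ) a * w).re ≤ ‖(starRingEnd ℂ) a * w‖ := Complex.re_le_norm _
      _ = q * p := by rw [norm_mul, Complex.norm_conj]
  have e1 : ‖w + a‖ ^ 2 = p ^ 2 + q ^ 2 + 2 * ((starRingEnd ℂ) a * w).re := by
    rw [Complex.sq_norm, Complex.normSq_add, ← Complex.sq_norm w, ← Complex.sq_norm a,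
      mul_comm w ((starRingEnd ℂ) a)]
  have e2 : ‖1 + (starRingEnd ℂ) a * w‖ ^ 2
      = 1 + 2 * ((starRingEnd ℂ) a * w).re + p ^ 2 * q ^ 2 := by
    rw [Complex.sq_norm, Complex.normSq_add, Complex.normSq_one]
    rw [Complex.normSq_mul, Complex.normSq_conj, ← Complex.sq_norm, ← Complex.sq_norm, ← hp, ← hq]
    simp [Complex.conj_re]
    ring
  have hL0 : 0 ≤ ‖w + a‖ * (1 + q * p) := by positivity
  have hR0 : 0 ≤ (q + p) * ‖1 + (starRingEnd ℂ) a * w‖ := by positivity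
  have hsq : (‖w + a‖ * (1 + q * p)) ^ 2
      ≤ ((q + p) * ‖1 + (starRingEnd ℂ) a * w‖) ^ 2 := by
    rw [mul_pow, mul_pow, e1, e2]
    have hp1 : p ^ 2 ≤ 1 := by nlinarith
    have hq1 : q ^ 2 ≤ 1 := by nlinarith
    have hB : 0 ≤ (1 + q * p) ^ 2 - (q + p) ^ 2 := by
      nlinarith [mul_nonneg (sub_nonneg.2 hp1) (sub_nonneg.2 hq1)]
    nlinarith [mul_nonneg (sub_nonneg.2 ht) hB]
  calc ‖w + a‖ * (1 + q * p) ≤ (q + p) * ‖1 + (starRingEnd ℂ) a * w‖ := by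
        nlinarith [hsq, hL0, hR0]

lemma mono_frac_r {a r r' : ℝ} (ha0 : 0 ≤ a) (ha : a ≤ 1) (hr0 : 0 ≤ r) (hrr : r ≤ r') :
    (a + r) / (1 + a * r) ≤ (a + r') / (1 + a * r') := by
  have h1 : 0 < 1 + a * r := by nlinarith
  have h2 : 0 < 1 + a * r' := by nlinarith
  rw [div_le_div_iff₀ h1 h2]
  nlinarith [mul_nonneg (sub_nonneg.2 hrr) (sub_nonneg.2 ha), mul_nonneg (sub_nonneg.2 hrr) ha0]

lemma mono_frac_a {a a' r : ℝ} (ha0 : 0 ≤ a) (haa : a ≤ a') (ha' : a' ≤ 1) (hr0 : 0 ≤ r)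
    (hr : r ≤ 1) : (a + r) / (1 + a * r) ≤ (a' + r) / (1 + a' * r) := by
  have h1 : 0 < 1 + a * r := by nlinarith
  have h2 : 0 < 1 + a' * r := by nlinarith
  rw [div_le_div_iff₀ h1 h2]
  have : r ^ 2 ≤ 1 := by nlinarith
  nlinarith [mul_nonneg (sub_nonneg.2 haa) (sub_nonneg.2 this)]

lemma schwarzPick {g : ℂ → ℂ} (hg : AnalyticOnNhd ℂ g (ball 0 1))
    (hb : ∀ z ∈ ball (0:ℂ) 1, ‖g z‖ ≤ 1) (h0 : ‖g 0‖ < 1) :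
    ∀ z ∈ ball (0:ℂ) 1, ‖g z‖ ≤
      (‖g 0‖ + ‖z‖) / (1 + ‖g 0‖ * ‖z‖) := by
  have h0m : (0:ℂ) ∈ ball (0:ℂ) 1 := by simp
  -- strict bound via maximum modulus
  have hlt : ∀ z ∈ ball (0:ℂ) 1, ‖g z‖ < 1 := by
    intro z hz
    rcases lt_or_eq_of_le (hb z hz) with h | h
    · exact h
    · exfalso
      have hmax : IsMaxOn (norm ∘ g) (ball (0:ℂ) 1) z := by
        intro w hw
        simp only [Function.comp_apply, Set.mem_setOf_eq, h]
        exact hb w hw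
      have := Complex.norm_eqOn_of_isPreconnected_of_isMaxOn
        (convex_ball (0:ℂ) 1).isPreconnected isOpen_ball hg.differentiableOn hz hmax h0m
      simp only [Function.comp_apply, Function.const_apply, h] at this
      rw [this] at h0
      exact lt_irrefl _ h0
  intro z hz
  set a := g 0 with ha_def
  have hzlt : ‖z‖ < 1 := by simpa [mem_ball_zero_iff] using hz
  have hD : ∀ w ∈ ball (0:ℂ) 1, (1:ℂ) - (starRingEnd ℂ) a * g w ≠ 0 :=
    fun w hw => den_ne_zero h0 (hb w hw)
  set h : ℂ → ℂ := fun w => (g w - a) / (1 - (starRingEnd ℂ) a * g w) with hh_def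
  have hana : AnalyticOnNhd ℂ h (ball 0 1) :=
    (hg.sub analyticOnNhd_const).div
      (analyticOnNhd_const.sub (analyticOnNhd_const.mul hg)) hD
  have hmaps : Set.MapsTo h (ball (0:ℂ) 1) (ball (0:ℂ) 1) := fun w hw =>
    mem_ball_zero_iff.2 (by simpa [hh_def] using mobius_lt_one h0 (hlt w hw))
  have h00 : h 0 = 0 := by simp [hh_def, ha_def]
  have habs : ‖h z‖ ≤ ‖z‖ :=
    Complex.norm_le_norm_of_mapsTo_ball hana.differentiableOn (hmaps.mono_right ball_subset_closedBall) h00 hzlt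
  have hp1 : ‖h z‖ < 1 := lt_of_le_of_lt habs hzlt
  -- invert the Möbius transform
  have hDz := hD z hz
  have hinv : g z * (1 + (starRingEnd ℂ) a * h z) = h z + a := by
    simp only [hh_def]
    have hDz' : 1 - g z * (starRingEnd ℂ) a ≠ 0 := by rwa [mul_comm]
    field_simp [hDz, hDz']
    ring
  have hden2 : (1:ℂ) + (starRingEnd ℂ) a * h z ≠ 0 := by
    have := den_ne_zero h0 (le_of_lt (by simpa using hp1 : ‖-(h z)‖ < 1))
    rwa [mul_neg, sub_neg_eq_add] at this
  have hdenpos : 0 < ‖1 + (starRingEnd ℂ) a * h z‖ :=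
    norm_pos_iff.2 hden2
  set p := ‖h z‖ with hp_def
  set q := ‖a‖ with hq_def
  have hq0 : 0 ≤ q := norm_nonneg a
  have hp0 : 0 ≤ p := norm_nonneg (h z)
  have key := mobius_key a (h z) (le_of_lt h0) (le_of_lt hp1)
  have e : ‖g z‖ * ‖1 + (starRingEnd ℂ) a * h z‖
      = ‖h z + a‖ := by rw [← norm_mul, hinv]
  have hqp : 0 < 1 + q * p := by nlinarith
  have step1 : ‖g z‖ ≤ (q + p) / (1 + q * p) := by
    rw [le_div_iff₀ hqp]
    have hmm : ‖g z‖ * (1 + q * p) * ‖1 + (starRingEnd ℂ) a * h z‖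
        ≤ (q + p) * ‖1 + (starRingEnd ℂ) a * h z‖ := by
      calc ‖g z‖ * (1 + q * p) * ‖1 + (starRingEnd ℂ) a * h z‖
          = ‖h z + a‖ * (1 + q * p) := by rw [← e]; ring
        _ ≤ (q + p) * ‖1 + (starRingEnd ℂ) a * h z‖ := key
    exact le_of_mul_le_mul_right hmm hdenpos
  calc ‖g z‖ ≤ (q + p) / (1 + q * p) := step1
    _ ≤ (q + ‖z‖) / (1 + q * ‖z‖) :=
        mono_frac_r hq0 (le_of_lt h0) hp0 habs

/-- Operator-valued Schwarz–Pick growth estimate: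
    ‖f(z)‖ ≤ (‖f(0)‖ + |z|)/(1 + ‖f(0)‖·|z|). -/
theorem stmt8 {H : Type*} [NormedAddCommGroup H] [InnerProductSpace ℂ H] [CompleteSpace H]
    (f : ℂ → H →L[ℂ] H) (a₀ : ℂ)
    (hf : AnalyticOnNhd ℂ f (Metric.ball 0 1))
    (hb : ∀ z ∈ Metric.ball (0:ℂ) 1, ‖f z‖ ≤ 1)
    (hA0 : f 0 = a₀ • (1 : H →L[ℂ] H)) (ha0 : ‖a₀‖ < 1) :
    ∀ z ∈ Metric.ball (0:ℂ) 1,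
      ‖f z‖ ≤ (‖f 0‖ + ‖z‖) / (1 + ‖f 0‖ * ‖z‖) := by
  intro z hz
  have hzlt : ‖z‖ < 1 := by simpa [mem_ball_zero_iff] using hz
  have hz0 : 0 ≤ ‖z‖ := norm_nonneg z
  rcases subsingleton_or_nontrivial H with hS | hN
  · have h1 : f z = f 0 := Subsingleton.elim _ _
    have h2 : f 0 = 0 := Subsingleton.elim _ _
    rw [h1, h2]
    simp only [norm_zero, zero_add, zero_mul, add_zero]
    positivity
  · have hn0 : ‖f 0‖ = ‖a₀‖ := by
      rw [hA0, norm_smul, norm_one, mul_one]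
    set C : ℝ := (‖a₀‖ + ‖z‖) / (1 + ‖a₀‖ * ‖z‖) with hC
    have ha0' : 0 ≤ ‖a₀‖ := norm_nonneg a₀
    have hCpos : 0 ≤ C := by positivity
    -- key scalar estimate
    have key : ∀ x y : H, ‖x‖ ≤ 1 → ‖y‖ ≤ 1 →
        ‖(inner ℂ y (f z x) : ℂ)‖ ≤ C := by
      intro x y hx hy
      set g : ℂ → ℂ := fun w => ((innerSL ℂ y).comp (ContinuousLinearMap.apply ℂ H x)) (f w)
        with hg_def
      have hgval : ∀ w, g w = (inner ℂ y (f w x) : ℂ) := fun w => rfl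
      have hgana : AnalyticOnNhd ℂ g (ball 0 1) :=
        ContinuousLinearMap.comp_analyticOnNhd _ hf
      have hgb : ∀ w ∈ ball (0:ℂ) 1, ‖g w‖ ≤ 1 := by
        intro w hw
        rw [hgval]
        have h1 : ‖f w x‖ ≤ 1 := by
          calc ‖f w x‖ ≤ ‖f w‖ * ‖x‖ := (f w).le_opNorm x
            _ ≤ 1 * 1 := mul_le_mul (hb w hw) hx (norm_nonneg x) zero_le_one
            _ = 1 := one_mul 1
        calc ‖(inner ℂ y (f w x) : ℂ)‖ ≤ ‖y‖ * ‖f w x‖ := norm_inner_le_norm y (f w x)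
          _ ≤ 1 * 1 := mul_le_mul hy h1 (norm_nonneg _) zero_le_one
          _ = 1 := one_mul 1
      have hg0 : ‖g 0‖ ≤ ‖a₀‖ := by
        rw [hgval, hA0]
        simp only [ContinuousLinearMap.smul_apply, ContinuousLinearMap.one_apply,
          inner_smul_right]
        rw [norm_mul]
        calc ‖a₀‖ * ‖(inner ℂ y x : ℂ)‖ ≤ ‖a₀‖ * (‖y‖ * ‖x‖) := by
              gcongr
              exact norm_inner_le_norm y x
          _ ≤ ‖a₀‖ * (1 * 1) := by gcongr
          _ = ‖a₀‖ := by ring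
      have hg0lt : ‖g 0‖ < 1 := lt_of_le_of_lt hg0 ha0
      have := schwarzPick hgana hgb hg0lt z hz
      rw [hgval] at this
      calc ‖(inner ℂ y (f z x) : ℂ)‖
          ≤ (‖g 0‖ + ‖z‖) / (1 + ‖g 0‖ * ‖z‖) := this
        _ ≤ C := mono_frac_a (norm_nonneg (g 0)) hg0 (le_of_lt ha0) hz0 (le_of_lt hzlt)
    -- pointwise norm estimate on the unit ball
    have hpt : ∀ x : H, ‖x‖ ≤ 1 → ‖f z x‖ ≤ C := by
      intro x hx
      by_cases hfx : f z x = 0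
      · rw [hfx, norm_zero]; exact hCpos
      · have hnorm : ‖f z x‖ ≠ 0 := norm_ne_zero_iff.2 hfx
        have hne : ((‖f z x‖ : ℝ) : ℂ) ≠ 0 := Complex.ofReal_ne_zero.2 hnorm
        set y : H := ((‖f z x‖ : ℝ) : ℂ)⁻¹ • f z x with hy_def
        have hy : ‖y‖ ≤ 1 := by
          rw [hy_def, norm_smul, norm_inv, Complex.norm_real, norm_norm,
            inv_mul_cancel₀ hnorm]
        have hinner : (inner ℂ y (f z x) : ℂ) = ((‖f z x‖ : ℝ) : ℂ) := by
          rw [hy_def, inner_smul_left, inner_self_eq_norm_sq_to_K, map_inv₀,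
            Complex.conj_ofReal]
          field_simp
          rfl
        have := key x y hx hy
        rw [hinner, Complex.norm_real, norm_norm] at this
        exact this
    -- conclude via operator norm
    rw [hn0]
    refine ContinuousLinearMap.opNorm_le_bound _ hCpos ?_
    intro x
    by_cases hx0 : x = 0
    · simp [hx0]
    · have hnx : ‖x‖ ≠ 0 := norm_ne_zero_iff.2 hx0
      have hu : ‖((‖x‖ : ℝ) : ℂ)⁻¹ • x‖ ≤ 1 := by
        rw [norm_smul, norm_inv, Complex.norm_real, norm_norm, inv_mul_cancel₀ hnx]
      have h1 := hpt _ hu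
      rw [map_smul, norm_smul, norm_inv, Complex.norm_real, norm_norm] at h1
      calc ‖f z x‖ = ‖x‖ * (‖x‖⁻¹ * ‖f z x‖) := by field_simp
        _ ≤ ‖x‖ * C := mul_le_mul_of_nonneg_left h1 (norm_nonneg x)
        _ = C * ‖x‖ := by ring
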